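/- Let Δ = ⟨F_1,…,F_r⟩ ∪ ⟨G_1,…,G_s⟩ be a Cohen-Macaulay simplicial forest (with minimal presentation, grafted by the simplices F_1,…,F_r). Then the matching number of Δ equals the number of grafting simplices: ν(Δ) = r. -/

import Mathlib

open MvPolynomial

/-- A simplicial complex on the vertex set `V`, presented by its set of facets
(the maximal faces).  Every facet is nonempty and no facet contains another. -/
structure SimplicialComplexOn (V : Type) [Fintype V] [DecidableEq V] : Type where
  facets : Finset (Finset V)
  nonempty_facet : ∀ F ∈ facets, F.Nonempty
  antichain : ∀ F ∈ facets, ∀ G ∈ facets, F ⊆ G → F = G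

variable {V : Type} [Fintype V] [DecidableEq V]

/-- `F` is a leaf of the collection of facets `S`: either `F` is the only facet, or
there is a facet `G ≠ F` (a joint) with `F ∩ H ⊆ F ∩ G` for every facet `H ≠ F`. -/
def IsLeafOf (S : Finset (Finset V)) (F : Finset V) : Prop :=
  F ∈ S ∧ ((∀ H ∈ S, H = F) ∨
    ∃ G ∈ S, G ≠ F ∧ ∀ H ∈ S, H ≠ F → F ∩ H ⊆ F ∩ G)

/-- The forest property for a facet collection: every nonempty subcollection
(i.e. every nonempty subcomplex) has a leaf. -/
def HasLeafProp (S : Finset (Finset V)) : Prop :=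
  ∀ T ⊆ S, T.Nonempty → ∃ F, IsLeafOf T F

/-- A good leaf: a facet which is a leaf of every subcomplex containing it. -/
def IsGoodLeafOf (S : Finset (Finset V)) (F : Finset V) : Prop :=
  F ∈ S ∧ ∀ T ⊆ S, F ∈ T → IsLeafOf T F

/-- A special leaf: a leaf `F` such that for all facets `H, H' ≠ F`,
`H ∩ H' ≠ ∅` iff `(H ∩ H') \ F ≠ ∅`. -/
def IsSpecialLeafOf (S : Finset (Finset V)) (F : Finset V) : Prop :=
  IsLeafOf S F ∧ ∀ H ∈ S, ∀ H' ∈ S, H ≠ F → H' ≠ F →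
    ((H ∩ H').Nonempty ↔ ((H ∩ H') \ F).Nonempty)

/-- A matching: a subcollection of the facets that is pairwise disjoint. -/
def IsMatchingOf (S : Finset (Finset V)) (M : Finset (Finset V)) : Prop :=
  M ⊆ S ∧ ∀ F ∈ M, ∀ G ∈ M, F ≠ G → F ∩ G = ∅

/-- The matching number: maximum size of a matching. -/
noncomputable def matchingNumberOf (S : Finset (Finset V)) : ℕ :=
  sSup {n | ∃ M : Finset (Finset V), IsMatchingOf S M ∧ M.card = n}

/-- The facet collection `S` is grafted: it decomposes as `Fs ∪ Gs` where
(1) every vertex of a `G ∈ Gs` lies in some `F ∈ Fs`, (2) `Fs` is exactly the set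
of leaves of `S`, (3) `Fs` and `Gs` are disjoint, (4) the members of `Fs` are
pairwise disjoint, and (5) for each `G ∈ Gs`, deleting the facet `G` leaves a
grafted collection. -/
inductive IsGrafted : Finset (Finset V) → Prop where
  | intro (S Fs Gs : Finset (Finset V))
      (hunion : S = Fs ∪ Gs)
      (hdisj : Disjoint Fs Gs)
      (hcover : ∀ G ∈ Gs, ∀ v ∈ G, ∃ F ∈ Fs, v ∈ F)
      (hleaves : ∀ F, IsLeafOf S F ↔ F ∈ Fs)
      (hFdisj : ∀ F ∈ Fs, ∀ F' ∈ Fs, F ≠ F' → F ∩ F' = ∅)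
      (hrec : ∀ G ∈ Gs, IsGrafted (S.erase G)) :
      IsGrafted S

/-- `S` is the (minimal presentation of the) grafting of the collection `Gs`
with the simplices `Fs`. -/
def IsGraftingDecomp (S Fs Gs : Finset (Finset V)) : Prop :=
  S = Fs ∪ Gs ∧ Disjoint Fs Gs ∧
  (∀ G ∈ Gs, ∀ v ∈ G, ∃ F ∈ Fs, v ∈ F) ∧
  (∀ F, IsLeafOf S F ↔ F ∈ Fs) ∧
  (∀ F ∈ Fs, ∀ F' ∈ Fs, F ≠ F' → F ∩ F' = ∅) ∧
  (∀ G ∈ Gs, IsGrafted (S.erase G))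

/-- A Cohen-Macaulay simplicial forest, combinatorially: a grafted simplicial forest. -/
def IsCMForestFacets (S : Finset (Finset V)) : Prop :=
  HasLeafProp S ∧ IsGrafted S

/-- The closed neighborhood `N[F] = {F} ∪ {G ∈ S : G ≠ F, G ∩ F ≠ ∅}`. -/
def closedNbhd (S : Finset (Finset V)) (F : Finset V) : Finset (Finset V) :=
  insert F (S.filter fun G => G ≠ F ∧ (G ∩ F).Nonempty)

/-- The contraction of the facet collection `S` on `A`: the minimal members of
`{F \ A : F ∈ S}`. -/
def contraction (S : Finset (Finset V)) (A : Finset V) : Finset (Finset V) :=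
  (S.image fun F => F \ A).filter fun F' => ∀ G ∈ S, G \ A ⊆ F' → G \ A = F'

variable (K : Type) [Field K]

/-- The square-free monomial `x_S = ∏_{v ∈ S} x_v`. -/
noncomputable def xMon (S : Finset V) : MvPolynomial V K := ∏ v ∈ S, X v

/-- The facet ideal `I(Δ) = ⟨x_F : F a facet⟩`. -/
noncomputable def facetIdealOf (S : Finset (Finset V)) : Ideal (MvPolynomial V K) :=
  Ideal.span { p | ∃ F ∈ S, p = xMon K F }

/-- The `k`-th square-free power of an ideal: the ideal generated by all
square-free monomials lying in `I ^ k`. -/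
noncomputable def sqfreePow (I : Ideal (MvPolynomial V K)) (k : ℕ) :
    Ideal (MvPolynomial V K) :=
  Ideal.span { p | (∃ S : Finset V, p = xMon K S) ∧ p ∈ I ^ k }

/-- The depth of `R/I` with respect to the homogeneous maximal ideal
`m = ⟨x_v : v ∈ V⟩`: the largest length of an `R/I`-regular sequence of
elements of `m`. -/
noncomputable def gradedDepth (I : Ideal (MvPolynomial V K)) : ℕ :=
  sSup {n | ∃ rs : List (MvPolynomial V K), rs.length = n ∧
    (∀ r ∈ rs, r ∈ Ideal.span (Set.range (X : V → MvPolynomial V K))) ∧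
    RingTheory.Sequence.IsRegular (MvPolynomial V K ⧸ I) rs}

/-- `R/I` is Cohen-Macaulay: its depth equals its Krull dimension. -/
def IsCMQuot (I : Ideal (MvPolynomial V K)) : Prop :=
  ((gradedDepth K I : ℕ∞) : WithBot ℕ∞) = ringKrullDim (MvPolynomial V K ⧸ I)

section Statements

variable {V : Type} [Fintype V] [DecidableEq V] (K : Type) [Field K]

/-- Key counting lemma: if every member of a pairwise disjoint family `M'` meets at
least two members of a pairwise disjoint family `Fs'`, all inside a simplicial forest,
then `|M'| ≤ |Fs'|`. -/
lemma key_aux {V : Type} [Fintype V] [DecidableEq V] (S : Finset (Finset V))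
    (hS : HasLeafProp S) :
    ∀ n (M' Fs' : Finset (Finset V)), M'.card ≤ n → M' ⊆ S → Fs' ⊆ S →
    Disjoint M' Fs' →
    (∀ G ∈ M', ∀ G' ∈ M', G ≠ G' → G ∩ G' = ∅) →
    (∀ F ∈ Fs', ∀ F' ∈ Fs', F ≠ F' → F ∩ F' = ∅) →
    (∀ G ∈ M', ∃ F1 ∈ Fs', ∃ F2 ∈ Fs', F1 ≠ F2 ∧ (G ∩ F1).Nonempty ∧ (G ∩ F2).Nonempty) →
    M'.card ≤ Fs'.card := by
  intro n
  induction n with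
  | zero =>
    intro M' Fs' hcard _ _ _ _ _ _
    exact hcard.trans (Nat.zero_le _)
  | succ n ih =>
    intro M' Fs' hcard hMS hFS hdisj hMm hFm hcov
    rcases M'.eq_empty_or_nonempty with rfl | hne
    · simp
    classical
    set Fs'' := Fs'.filter (fun F => ∃ G ∈ M', (G ∩ F).Nonempty) with hFs''def
    set T := M' ∪ Fs'' with hTdef
    have hFs''sub : Fs'' ⊆ Fs' := Finset.filter_subset _ _
    have hTS : T ⊆ S := Finset.union_subset hMS (hFs''sub.trans hFS)
    obtain ⟨G0, hG0⟩ := hne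
    have hTne : T.Nonempty := ⟨G0, Finset.mem_union_left _ hG0⟩
    obtain ⟨L, hLT, hLalt⟩ := hS T hTS hTne
    -- helper: membership of F's meeting some G in Fs''
    have hmemFs'' : ∀ F ∈ Fs', ∀ G ∈ M', (G ∩ F).Nonempty → F ∈ Fs'' := by
      intro F hF G hG hGF
      exact Finset.mem_filter.mpr ⟨hF, G, hG, hGF⟩
    rcases hLalt with honly | ⟨J, hJT, hJneL, hjoint⟩
    · -- T has a single facet: impossible since some G meets two distinct F's
      obtain ⟨F1, hF1, F2, hF2, h12, n1, n2⟩ := hcov G0 hG0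
      have e1 : F1 = L := honly F1 (Finset.mem_union_right _ (hmemFs'' F1 hF1 G0 hG0 n1))
      have e2 : F2 = L := honly F2 (Finset.mem_union_right _ (hmemFs'' F2 hF2 G0 hG0 n2))
      exact absurd (e1.trans e2.symm) h12
    · by_cases hLM : L ∈ M'
      · -- the leaf is in M' : contradiction
        obtain ⟨F1, hF1, F2, hF2, h12, n1, n2⟩ := hcov L hLM
        have hF1T : F1 ∈ T := Finset.mem_union_right _ (hmemFs'' F1 hF1 L hLM n1)
        have hF2T : F2 ∈ T := Finset.mem_union_right _ (hmemFs'' F2 hF2 L hLM n2)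
        have hF1L : F1 ≠ L := fun h => (Finset.disjoint_left.mp hdisj hLM) (h ▸ hF1)
        have hF2L : F2 ≠ L := fun h => (Finset.disjoint_left.mp hdisj hLM) (h ▸ hF2)
        have s1 : L ∩ F1 ⊆ L ∩ J := hjoint F1 hF1T hF1L
        have s2 : L ∩ F2 ⊆ L ∩ J := hjoint F2 hF2T hF2L
        have hJFs : J ∈ Fs' := by
          rcases Finset.mem_union.mp hJT with hJM | hJF
          · obtain ⟨v, hv⟩ := n1
            have := hMm L hLM J hJM (fun h => hJneL h.symm)
            have hv' : v ∈ L ∩ J := s1 hv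
            rw [this] at hv'
            exact absurd hv' (Finset.notMem_empty v)
          · exact hFs''sub hJF
        obtain ⟨v1, hv1⟩ := n1
        obtain ⟨v2, hv2⟩ := n2
        have e1 : F1 = J := by
          by_contra h
          have := hFm F1 hF1 J hJFs h
          have hv1' : v1 ∈ F1 ∩ J :=
            Finset.mem_inter.mpr ⟨(Finset.mem_inter.mp hv1).2,
              (Finset.mem_inter.mp (s1 hv1)).2⟩
          rw [this] at hv1'
          exact Finset.notMem_empty v1 hv1'
        have e2 : F2 = J := by
          by_contra h
          have := hFm F2 hF2 J hJFs h
          have hv2' : v2 ∈ F2 ∩ J :=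
            Finset.mem_inter.mpr ⟨(Finset.mem_inter.mp hv2).2,
              (Finset.mem_inter.mp (s2 hv2)).2⟩
          rw [this] at hv2'
          exact Finset.notMem_empty v2 hv2'
        exact absurd (e1.trans e2.symm) h12
      · -- the leaf L is in Fs'' : it meets a unique G ∈ M'
        have hLF : L ∈ Fs'' := (Finset.mem_union.mp hLT).resolve_left hLM
        obtain ⟨hLFs', G, hG, hGL⟩ := Finset.mem_filter.mp hLF
        have hJM : J ∈ M' := by
          rcases Finset.mem_union.mp hJT with hJM | hJF
          · exact hJM
          · exfalso
            have hGT : G ∈ T := Finset.mem_union_left _ hG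
            have hGneL : G ≠ L := fun h => hLM (h ▸ hG)
            have s : L ∩ G ⊆ L ∩ J := hjoint G hGT hGneL
            have hLJ : L ∩ J = ∅ := hFm L hLFs' J (hFs''sub hJF) (fun h => hJneL h.symm)
            obtain ⟨v, hv⟩ := hGL
            have hv' : v ∈ L ∩ J := s (by
              rw [Finset.inter_comm]; exact hv)
            rw [hLJ] at hv'
            exact Finset.notMem_empty v hv'
        have huniq : ∀ G' ∈ M', (G' ∩ L).Nonempty → G' = J := by
          intro G' hG' hG'L
          have hG'T : G' ∈ T := Finset.mem_union_left _ hG'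
          have hG'neL : G' ≠ L := fun h => hLM (h ▸ hG')
          have s : L ∩ G' ⊆ L ∩ J := hjoint G' hG'T hG'neL
          by_contra h
          have := hMm G' hG' J hJM h
          obtain ⟨v, hv⟩ := hG'L
          have hv' : v ∈ G' ∩ J :=
            Finset.mem_inter.mpr ⟨(Finset.mem_inter.mp hv).1,
              (Finset.mem_inter.mp (s (by rw [Finset.inter_comm]; exact hv))).2⟩
          rw [this] at hv'
          exact Finset.notMem_empty v hv'
        have hGJ : G = J := huniq G hG hGL
        -- apply IH to M'.erase G, Fs'.erase L
        have hcard' : (M'.erase G).card ≤ n := by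
          rw [Finset.card_erase_of_mem hG]
          omega
        have hdisj' : Disjoint (M'.erase G) (Fs'.erase L) :=
          hdisj.mono (Finset.erase_subset _ _) (Finset.erase_subset _ _)
        have hcov' : ∀ G' ∈ M'.erase G, ∃ F1 ∈ Fs'.erase L, ∃ F2 ∈ Fs'.erase L,
            F1 ≠ F2 ∧ (G' ∩ F1).Nonempty ∧ (G' ∩ F2).Nonempty := by
          intro G' hG'e
          obtain ⟨hne', hG'⟩ := Finset.mem_erase.mp hG'e
          obtain ⟨F1, hF1, F2, hF2, h12, n1, n2⟩ := hcov G' hG'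
          have hF1L : F1 ≠ L := by
            rintro rfl
            exact hne' ((huniq G' hG' n1).trans hGJ.symm)
          have hF2L : F2 ≠ L := by
            rintro rfl
            exact hne' ((huniq G' hG' n2).trans hGJ.symm)
          exact ⟨F1, Finset.mem_erase.mpr ⟨hF1L, hF1⟩,
            F2, Finset.mem_erase.mpr ⟨hF2L, hF2⟩, h12, n1, n2⟩
        have hIH := ih (M'.erase G) (Fs'.erase L) hcard'
          ((Finset.erase_subset _ _).trans hMS)
          ((Finset.erase_subset _ _).trans hFS)
          hdisj'
          (fun a ha b hb hab => hMm a (Finset.mem_of_mem_erase ha)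
            b (Finset.mem_of_mem_erase hb) hab)
          (fun a ha b hb hab => hFm a (Finset.mem_of_mem_erase ha)
            b (Finset.mem_of_mem_erase hb) hab)
          hcov'
        rw [Finset.card_erase_of_mem hG, Finset.card_erase_of_mem hLFs'] at hIH
        have h1 : 1 ≤ M'.card := Finset.card_pos.mpr ⟨G, hG⟩
        have h2 : 1 ≤ Fs'.card := Finset.card_pos.mpr ⟨L, hLFs'⟩
        omega

theorem stmt8 (Δ : SimplicialComplexOn V) (Fs Gs : Finset (Finset V))
    (hforest : HasLeafProp Δ.facets)
    (hdecomp : IsGraftingDecomp Δ.facets Fs Gs) :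
    matchingNumberOf Δ.facets = Fs.card := by
  classical
  obtain ⟨hunion, hdisjFG, hcover, _, hFdisj, _⟩ := hdecomp
  set S := Δ.facets with hSdef
  have hFsS : Fs ⊆ S := by rw [hunion]; exact Finset.subset_union_left
  -- upper bound: every matching has size at most |Fs|
  have hbound : ∀ M : Finset (Finset V), IsMatchingOf S M → M.card ≤ Fs.card := by
    rintro M ⟨hMS, hMm⟩
    -- every G ∈ M \ Fs meets two distinct members of Fs \ M
    have hcov2 : ∀ G ∈ M \ Fs, ∃ F1 ∈ Fs \ M, ∃ F2 ∈ Fs \ M,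
        F1 ≠ F2 ∧ (G ∩ F1).Nonempty ∧ (G ∩ F2).Nonempty := by
      intro G hGmem
      obtain ⟨hGM, hGnF⟩ := Finset.mem_sdiff.mp hGmem
      have hGS : G ∈ S := hMS hGM
      have hGGs : G ∈ Gs := by
        have := hGS
        rw [hunion] at this
        exact (Finset.mem_union.mp this).resolve_left hGnF
      -- any F ∈ Fs meeting G is not in M
      have hnotM : ∀ F ∈ Fs, (G ∩ F).Nonempty → F ∈ Fs \ M := by
        intro F hF ⟨v, hv⟩
        refine Finset.mem_sdiff.mpr ⟨hF, fun hFM => ?_⟩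
        have hne : G ≠ F := fun h => hGnF (h ▸ hF)
        have := hMm G hGM F hFM hne
        rw [this] at hv
        exact Finset.notMem_empty v hv
      obtain ⟨v, hv⟩ := Δ.nonempty_facet G hGS
      obtain ⟨F1, hF1, hvF1⟩ := hcover G hGGs v hv
      have n1 : (G ∩ F1).Nonempty := ⟨v, Finset.mem_inter.mpr ⟨hv, hvF1⟩⟩
      by_cases h : ∃ F2 ∈ Fs, F2 ≠ F1 ∧ (G ∩ F2).Nonempty
      · obtain ⟨F2, hF2, h21, n2⟩ := h
        exact ⟨F1, hnotM F1 hF1 n1, F2, hnotM F2 hF2 n2, fun hh => h21 hh.symm, n1, n2⟩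
      · exfalso
        push_neg at h
        have hsub : G ⊆ F1 := by
          intro v' hv'
          obtain ⟨F, hF, hvF⟩ := hcover G hGGs v' hv'
          have nF : (G ∩ F).Nonempty := ⟨v', Finset.mem_inter.mpr ⟨hv', hvF⟩⟩
          by_cases hFF1 : F = F1
          · exact hFF1 ▸ hvF
          · exact absurd nF (Finset.not_nonempty_iff_eq_empty.mpr (h F hF hFF1))
        have := Δ.antichain G hGS F1 (hFsS hF1) hsub
        exact hGnF (this ▸ hF1)
    have hkey := key_aux S hforest (M \ Fs).card (M \ Fs) (Fs \ M) le_rfl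
      ((Finset.sdiff_subset).trans hMS)
      ((Finset.sdiff_subset).trans hFsS)
      (by
        rw [Finset.disjoint_left]
        intro a ha hb
        exact (Finset.mem_sdiff.mp ha).2 (Finset.mem_sdiff.mp hb).1)
      (fun a ha b hb hab => hMm a (Finset.mem_sdiff.mp ha).1 b (Finset.mem_sdiff.mp hb).1 hab)
      (fun a ha b hb hab => hFdisj a (Finset.mem_sdiff.mp ha).1 b (Finset.mem_sdiff.mp hb).1 hab)
      hcov2
    have e1 : (M ∩ Fs).card + (M \ Fs).card = M.card := Finset.card_inter_add_card_sdiff M Fs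
    have e2 : (Fs ∩ M).card + (Fs \ M).card = Fs.card := Finset.card_inter_add_card_sdiff Fs M
    have e3 : (M ∩ Fs).card = (Fs ∩ M).card := by rw [Finset.inter_comm]
    omega
  -- Fs itself is a matching
  have hFsMatch : IsMatchingOf S Fs := ⟨hFsS, hFdisj⟩
  apply le_antisymm
  · refine csSup_le ⟨Fs.card, Fs, hFsMatch, rfl⟩ ?_
    rintro n ⟨M, hM, rfl⟩
    exact hbound M hM
  · exact le_csSup ⟨Fs.card, by rintro n ⟨M, hM, rfl⟩; exact hbound M hM⟩
      ⟨Fs, hFsMatch, rfl⟩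

end Statements
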